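/- arXiv:1501.04783 — 2 statements merged into one kernel-verified Lean document; each statement's English description precedes it below -/
import Mathlib

section
/- For orthonormal vectors u, v, w in ℝ⁷, one has χ(u,v,w) = 0 if and only if φ₀(u,v,w) = 1 or φ₀(u,v,w) = −1 (i.e. the oriented 3-plane spanned by u,v,w is associative exactly when χ vanishes on it). -/
open scoped RealInnerProductSpace

noncomputable section

/-- ℝ⁷ with its Euclidean inner product. -/
abbrev V7 := EuclideanSpace ℝ (Fin 7)

/-- The standard G₂ 3-form φ₀ = e¹²³+e¹⁴⁵+e¹⁶⁷+e²⁴⁶−e²⁵⁷−e³⁴⁷−e³⁵⁶ on ℝ⁷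
(indices shifted to 0-based), written as a trilinear alternating function. -/
def phi0 : (Fin 3 → V7) → ℝ := fun v =>
  let m : Fin 7 → Fin 7 → Fin 7 → ℝ := fun i j k =>
    Matrix.det !![v 0 i, v 0 j, v 0 k; v 1 i, v 1 j, v 1 k; v 2 i, v 2 j, v 2 k]
  m 0 1 2 + m 0 3 4 + m 0 5 6 + m 1 3 5 - m 1 4 6 - m 2 3 6 - m 2 4 5

/-- The 4-form ∗φ₀ = e⁴⁵⁶⁷+e²³⁶⁷+e²³⁴⁵+e¹³⁵⁷−e¹³⁴⁶−e¹²⁵⁶−e¹²⁴⁷ (0-based indices). -/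
def starPhi0 : (Fin 4 → V7) → ℝ := fun v =>
  let m : Fin 7 → Fin 7 → Fin 7 → Fin 7 → ℝ := fun i j k l =>
    Matrix.det !![v 0 i, v 0 j, v 0 k, v 0 l; v 1 i, v 1 j, v 1 k, v 1 l;
                  v 2 i, v 2 j, v 2 k, v 2 l; v 3 i, v 3 j, v 3 k, v 3 l]
  m 3 4 5 6 + m 1 2 5 6 + m 1 2 3 4 + m 0 2 4 6 - m 0 2 3 5 - m 0 1 4 5 - m 0 1 3 6

/-- The cross product on ℝ⁷: the unique vector with ⟨u×v, z⟩ = φ₀(u,v,z) for all z. -/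
def cross (u v : V7) : V7 := WithLp.toLp 2 (fun i => phi0 ![u, v, EuclideanSpace.single i 1])

/-- The triple cross product χ: the unique vector with ⟨χ(u,v,w), z⟩ = ∗φ₀(u,v,w,z). -/
def chi (u v w : V7) : V7 := WithLp.toLp 2 (fun i => starPhi0 ![u, v, w, EuclideanSpace.single i 1])

/-- Interior product ξ⌟α : contraction of a (k+1)-form with ξ in its first slot. -/
def iprod {k : ℕ} (ξ : V7) (α : (Fin (k + 1) → V7) → ℝ) : (Fin k → V7) → ℝ :=
  fun v => α (Fin.cons ξ v)

/-- Wedge product of alternating forms (determinant convention). -/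
def wedge {p q : ℕ} (α : (Fin p → V7) → ℝ) (β : (Fin q → V7) → ℝ) :
    (Fin (p + q) → V7) → ℝ := fun v =>
  (1 / ((p.factorial : ℝ) * q.factorial)) *
    ∑ σ : Equiv.Perm (Fin (p + q)), ((Equiv.Perm.sign σ : ℤ) : ℝ) *
      α (fun i => v (σ (Fin.castAdd q i))) * β (fun j => v (σ (Fin.natAdd p j)))

/-- The dual covector ξ^# = ⟨ξ,·⟩, as a 1-form. -/
def dualCov (ξ : V7) : (Fin 1 → V7) → ℝ := fun v => ⟪ξ, v 0⟫

/-- The standard volume form e¹∧⋯∧e⁷ on ℝ⁷. -/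
def vol7 : (Fin 7 → V7) → ℝ := fun v => Matrix.det (Matrix.of fun i j => v i j)



lemma det3' (a b c d e f g h i : ℝ) :
    Matrix.det !![a,b,c;d,e,f;g,h,i] = a*e*i - a*f*h - b*d*i + b*f*g + c*d*h - c*e*g := by
  simp [Matrix.det_fin_three]

lemma det4' (a b c d e f g h i j k l m n o p : ℝ) :
    Matrix.det !![a,b,c,d;e,f,g,h;i,j,k,l;m,n,o,p] =
      a*(f*(k*p-l*o) - g*(j*p-l*n) + h*(j*o-k*n))
      - b*(e*(k*p-l*o) - g*(i*p-l*m) + h*(i*o-k*m))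
      + c*(e*(j*p-l*n) - f*(i*p-l*m) + h*(i*n-j*m))
      - d*(e*(j*o-k*n) - f*(i*o-k*m) + g*(i*n-j*m)) := by
  rw [Matrix.det_succ_row_zero]
  simp [Fin.sum_univ_succ, Matrix.det_fin_three, Matrix.submatrix_apply, Fin.succAbove]
  ring

set_option maxHeartbeats 1000000 in
lemma chi_apply_0 (u v w : V7) : chi u v w 0 = u 1*v 3*w 6 + u 1*v 4*w 5 - u 1*v 5*w 4 - u 1*v 6*w 3 + u 2*v 3*w 5 - u 2*v 4*w 6 - u 2*v 5*w 3 + u 2*v 6*w 4 - u 3*v 1*w 6 - u 3*v 2*w 5 + u 3*v 5*w 2 + u 3*v 6*w 1 - u 4*v 1*w 5 + u 4*v 2*w 6 + u 4*v 5*w 1 - u 4*v 6*w 2 + u 5*v 1*w 4 + u 5*v 2*w 3 - u 5*v 3*w 2 - u 5*v 4*w 1 + u 6*v 1*w 3 - u 6*v 2*w 4 - u 6*v 3*w 1 + u 6*v 4*w 2 := by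
  simp only [chi, starPhi0, phi0, Matrix.cons_val_zero, Matrix.cons_val_one, Matrix.head_cons,
    Matrix.cons_val_two, Matrix.cons_val_three, Matrix.tail_cons, det3', det4',
    PiLp.toLp_apply, EuclideanSpace.single_apply, Fin.reduceEq, reduceIte, Fin.isValue]
  ring

set_option maxHeartbeats 1000000 in
lemma chi_apply_1 (u v w : V7) : chi u v w 1 = -u 0*v 3*w 6 - u 0*v 4*w 5 + u 0*v 5*w 4 + u 0*v 6*w 3 - u 2*v 3*w 4 + u 2*v 4*w 3 - u 2*v 5*w 6 + u 2*v 6*w 5 + u 3*v 0*w 6 + u 3*v 2*w 4 - u 3*v 4*w 2 - u 3*v 6*w 0 + u 4*v 0*w 5 - u 4*v 2*w 3 + u 4*v 3*w 2 - u 4*v 5*w 0 - u 5*v 0*w 4 + u 5*v 2*w 6 + u 5*v 4*w 0 - u 5*v 6*w 2 - u 6*v 0*w 3 - u 6*v 2*w 5 + u 6*v 3*w 0 + u 6*v 5*w 2 := by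
  simp only [chi, starPhi0, phi0, Matrix.cons_val_zero, Matrix.cons_val_one, Matrix.head_cons,
    Matrix.cons_val_two, Matrix.cons_val_three, Matrix.tail_cons, det3', det4',
    PiLp.toLp_apply, EuclideanSpace.single_apply, Fin.reduceEq, reduceIte, Fin.isValue]
  ring

set_option maxHeartbeats 1000000 in
lemma chi_apply_2 (u v w : V7) : chi u v w 2 = -u 0*v 3*w 5 + u 0*v 4*w 6 + u 0*v 5*w 3 - u 0*v 6*w 4 + u 1*v 3*w 4 - u 1*v 4*w 3 + u 1*v 5*w 6 - u 1*v 6*w 5 + u 3*v 0*w 5 - u 3*v 1*w 4 + u 3*v 4*w 1 - u 3*v 5*w 0 - u 4*v 0*w 6 + u 4*v 1*w 3 - u 4*v 3*w 1 + u 4*v 6*w 0 - u 5*v 0*w 3 - u 5*v 1*w 6 + u 5*v 3*w 0 + u 5*v 6*w 1 + u 6*v 0*w 4 + u 6*v 1*w 5 - u 6*v 4*w 0 - u 6*v 5*w 1 := by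
  simp only [chi, starPhi0, phi0, Matrix.cons_val_zero, Matrix.cons_val_one, Matrix.head_cons,
    Matrix.cons_val_two, Matrix.cons_val_three, Matrix.tail_cons, det3', det4',
    PiLp.toLp_apply, EuclideanSpace.single_apply, Fin.reduceEq, reduceIte, Fin.isValue]
  ring

set_option maxHeartbeats 1000000 in
lemma chi_apply_3 (u v w : V7) : chi u v w 3 = u 0*v 1*w 6 + u 0*v 2*w 5 - u 0*v 5*w 2 - u 0*v 6*w 1 - u 1*v 0*w 6 - u 1*v 2*w 4 + u 1*v 4*w 2 + u 1*v 6*w 0 - u 2*v 0*w 5 + u 2*v 1*w 4 - u 2*v 4*w 1 + u 2*v 5*w 0 - u 4*v 1*w 2 + u 4*v 2*w 1 - u 4*v 5*w 6 + u 4*v 6*w 5 + u 5*v 0*w 2 - u 5*v 2*w 0 + u 5*v 4*w 6 - u 5*v 6*w 4 + u 6*v 0*w 1 - u 6*v 1*w 0 - u 6*v 4*w 5 + u 6*v 5*w 4 := by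
  simp only [chi, starPhi0, phi0, Matrix.cons_val_zero, Matrix.cons_val_one, Matrix.head_cons,
    Matrix.cons_val_two, Matrix.cons_val_three, Matrix.tail_cons, det3', det4',
    PiLp.toLp_apply, EuclideanSpace.single_apply, Fin.reduceEq, reduceIte, Fin.isValue]
  ring

set_option maxHeartbeats 1000000 in
lemma chi_apply_4 (u v w : V7) : chi u v w 4 = u 0*v 1*w 5 - u 0*v 2*w 6 - u 0*v 5*w 1 + u 0*v 6*w 2 - u 1*v 0*w 5 + u 1*v 2*w 3 - u 1*v 3*w 2 + u 1*v 5*w 0 + u 2*v 0*w 6 - u 2*v 1*w 3 + u 2*v 3*w 1 - u 2*v 6*w 0 + u 3*v 1*w 2 - u 3*v 2*w 1 + u 3*v 5*w 6 - u 3*v 6*w 5 + u 5*v 0*w 1 - u 5*v 1*w 0 - u 5*v 3*w 6 + u 5*v 6*w 3 - u 6*v 0*w 2 + u 6*v 2*w 0 + u 6*v 3*w 5 - u 6*v 5*w 3 := by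
  simp only [chi, starPhi0, phi0, Matrix.cons_val_zero, Matrix.cons_val_one, Matrix.head_cons,
    Matrix.cons_val_two, Matrix.cons_val_three, Matrix.tail_cons, det3', det4',
    PiLp.toLp_apply, EuclideanSpace.single_apply, Fin.reduceEq, reduceIte, Fin.isValue]
  ring

set_option maxHeartbeats 1000000 in
lemma chi_apply_5 (u v w : V7) : chi u v w 5 = -u 0*v 1*w 4 - u 0*v 2*w 3 + u 0*v 3*w 2 + u 0*v 4*w 1 + u 1*v 0*w 4 - u 1*v 2*w 6 - u 1*v 4*w 0 + u 1*v 6*w 2 + u 2*v 0*w 3 + u 2*v 1*w 6 - u 2*v 3*w 0 - u 2*v 6*w 1 - u 3*v 0*w 2 + u 3*v 2*w 0 - u 3*v 4*w 6 + u 3*v 6*w 4 - u 4*v 0*w 1 + u 4*v 1*w 0 + u 4*v 3*w 6 - u 4*v 6*w 3 - u 6*v 1*w 2 + u 6*v 2*w 1 - u 6*v 3*w 4 + u 6*v 4*w 3 := by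
  simp only [chi, starPhi0, phi0, Matrix.cons_val_zero, Matrix.cons_val_one, Matrix.head_cons,
    Matrix.cons_val_two, Matrix.cons_val_three, Matrix.tail_cons, det3', det4',
    PiLp.toLp_apply, EuclideanSpace.single_apply, Fin.reduceEq, reduceIte, Fin.isValue]
  ring

set_option maxHeartbeats 1000000 in
lemma chi_apply_6 (u v w : V7) : chi u v w 6 = -u 0*v 1*w 3 + u 0*v 2*w 4 + u 0*v 3*w 1 - u 0*v 4*w 2 + u 1*v 0*w 3 + u 1*v 2*w 5 - u 1*v 3*w 0 - u 1*v 5*w 2 - u 2*v 0*w 4 - u 2*v 1*w 5 + u 2*v 4*w 0 + u 2*v 5*w 1 - u 3*v 0*w 1 + u 3*v 1*w 0 + u 3*v 4*w 5 - u 3*v 5*w 4 + u 4*v 0*w 2 - u 4*v 2*w 0 - u 4*v 3*w 5 + u 4*v 5*w 3 + u 5*v 1*w 2 - u 5*v 2*w 1 + u 5*v 3*w 4 - u 5*v 4*w 3 := by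
  simp only [chi, starPhi0, phi0, Matrix.cons_val_zero, Matrix.cons_val_one, Matrix.head_cons,
    Matrix.cons_val_two, Matrix.cons_val_three, Matrix.tail_cons, det3', det4',
    PiLp.toLp_apply, EuclideanSpace.single_apply, Fin.reduceEq, reduceIte, Fin.isValue]
  ring

set_option maxHeartbeats 1000000 in
lemma phi0_apply (u v w : V7) : phi0 ![u, v, w] = u 0*v 1*w 2 - u 0*v 2*w 1 + u 0*v 3*w 4 - u 0*v 4*w 3 + u 0*v 5*w 6 - u 0*v 6*w 5 - u 1*v 0*w 2 + u 1*v 2*w 0 + u 1*v 3*w 5 - u 1*v 4*w 6 - u 1*v 5*w 3 + u 1*v 6*w 4 + u 2*v 0*w 1 - u 2*v 1*w 0 - u 2*v 3*w 6 - u 2*v 4*w 5 + u 2*v 5*w 4 + u 2*v 6*w 3 - u 3*v 0*w 4 - u 3*v 1*w 5 + u 3*v 2*w 6 + u 3*v 4*w 0 + u 3*v 5*w 1 - u 3*v 6*w 2 + u 4*v 0*w 3 + u 4*v 1*w 6 + u 4*v 2*w 5 - u 4*v 3*w 0 - u 4*v 5*w 2 - u 4*v 6*w 1 - u 5*v 0*w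 6 + u 5*v 1*w 3 - u 5*v 2*w 4 - u 5*v 3*w 1 + u 5*v 4*w 2 + u 5*v 6*w 0 + u 6*v 0*w 5 - u 6*v 1*w 4 - u 6*v 2*w 3 + u 6*v 3*w 2 + u 6*v 4*w 1 - u 6*v 5*w 0 := by
  simp only [chi, starPhi0, phi0, Matrix.cons_val_zero, Matrix.cons_val_one, Matrix.head_cons,
    Matrix.cons_val_two, Matrix.cons_val_three, Matrix.tail_cons, det3', det4',
    PiLp.toLp_apply, EuclideanSpace.single_apply, Fin.reduceEq, reduceIte, Fin.isValue]
  ring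

set_option maxHeartbeats 4000000 in
set_option maxRecDepth 100000 in
lemma chi_sum_sq (u v w : V7)
    (huu : u 0 * u 0 + u 1 * u 1 + u 2 * u 2 + u 3 * u 3 + u 4 * u 4 + u 5 * u 5 + u 6 * u 6 = 1) (hvv : v 0 * v 0 + v 1 * v 1 + v 2 * v 2 + v 3 * v 3 + v 4 * v 4 + v 5 * v 5 + v 6 * v 6 = 1) (hww : w 0 * w 0 + w 1 * w 1 + w 2 * w 2 + w 3 * w 3 + w 4 * w 4 + w 5 * w 5 + w 6 * w 6 = 1)
    (huv : u 0 * v 0 + u 1 * v 1 + u 2 * v 2 + u 3 * v 3 + u 4 * v 4 + u 5 * v 5 + u 6 * v 6 = 0) (hvw : v 0 * w 0 + v 1 * w 1 + v 2 * w 2 + v 3 * w 3 + v 4 * w 4 + v 5 * w 5 + v 6 * w 6 = 0) (huw : u 0 * w 0 + u 1 * w 1 + u 2 * w 2 + u 3 * w 3 + u 4 * w 4 + u 5 * w 5 + u 6 * w 6 = 0) :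
    chi u v w 0 ^ 2 + chi u v w 1 ^ 2 + chi u v w 2 ^ 2 + chi u v w 3 ^ 2 +
      chi u v w 4 ^ 2 + chi u v w 5 ^ 2 + chi u v w 6 ^ 2 = 1 - phi0 ![u, v, w] ^ 2 := by
  rw [chi_apply_0, chi_apply_1, chi_apply_2, chi_apply_3, chi_apply_4, chi_apply_5,
    chi_apply_6, phi0_apply]
  linear_combination ((v 0 * v 0 + v 1 * v 1 + v 2 * v 2 + v 3 * v 3 + v 4 * v 4 + v 5 * v 5 + v 6 * v 6) * (w 0 * w 0 + w 1 * w 1 + w 2 * w 2 + w 3 * w 3 + w 4 * w 4 + w 5 * w 5 + w 6 * w 6)) * huu + (w 0 * w 0 + w 1 * w 1 + w 2 * w 2 + w 3 * w 3 + w 4 * w 4 + w 5 * w 5 + w 6 * w 6) * hvv + hww +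
    (2 * (v 0 * w 0 + v 1 * w 1 + v 2 * w 2 + v 3 * w 3 + v 4 * w 4 + v 5 * w 5 + v 6 * w 6) * (u 0 * w 0 + u 1 * w 1 + u 2 * w 2 + u 3 * w 3 + u 4 * w 4 + u 5 * w 5 + u 6 * w 6) - (w 0 * w 0 + w 1 * w 1 + w 2 * w 2 + w 3 * w 3 + w 4 * w 4 + w 5 * w 5 + w 6 * w 6) * (u 0 * v 0 + u 1 * v 1 + u 2 * v 2 + u 3 * v 3 + u 4 * v 4 + u 5 * v 5 + u 6 * v 6)) * huv + (-((u 0 * u 0 + u 1 * u 1 + u 2 * u 2 + u 3 * u 3 + u 4 * u 4 + u 5 * u 5 + u 6 * u 6)) * (v 0 * w 0 + v 1 * w 1 + v 2 * w 2 + v 3 * w 3 + v 4 * w 4 + v 5 * w 5 + v 6 * w 6)) * hvw +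
    (-((v 0 * v 0 + v 1 * v 1 + v 2 * v 2 + v 3 * v 3 + v 4 * v 4 + v 5 * v 5 + v 6 * v 6)) * (u 0 * w 0 + u 1 * w 1 + u 2 * w 2 + u 3 * w 3 + u 4 * w 4 + u 5 * w 5 + u 6 * w 6)) * huw


set_option maxHeartbeats 1000000 in
/-- for orthonormal u,v,w, χ(u,v,w) = 0 iff φ₀(u,v,w) = ±1
(the oriented 3-plane ⟨u,v,w⟩ is associative exactly when χ vanishes on it). -/
theorem chi_eq_zero_iff_associative (u v w : V7) (h : Orthonormal ℝ ![u, v, w]) :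
    chi u v w = 0 ↔ phi0 ![u, v, w] = 1 ∨ phi0 ![u, v, w] = -1 := by
  rw [orthonormal_iff_ite] at h
  have huu := h 0 0
  have huv := h 0 1
  have huw := h 0 2
  have hvv := h 1 1
  have hvw := h 1 2
  have hww := h 2 2
  simp only [Matrix.cons_val_zero, Matrix.cons_val_one, Matrix.head_cons, Matrix.cons_val_two,
    Matrix.tail_cons, PiLp.inner_apply, RCLike.inner_apply, conj_trivial, Fin.sum_univ_seven,
    Fin.reduceEq, reduceIte, Fin.isValue] at huu huv huw hvv hvw hww
  have key := chi_sum_sq u v w huu hvv hww (by linear_combination huv) (by linear_combination hvw) (by linear_combination huw)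
  constructor
  · intro hz
    have h0 : ∀ i, chi u v w i = 0 := fun i => by simp [hz]
    rw [h0 0, h0 1, h0 2, h0 3, h0 4, h0 5, h0 6] at key
    have hp : phi0 ![u, v, w] * phi0 ![u, v, w] = 1 := by linear_combination key
    rcases mul_self_eq_one_iff.mp hp with h1 | h1
    · exact Or.inl h1
    · exact Or.inr h1
  · intro hp
    have hs : chi u v w 0 ^ 2 + chi u v w 1 ^ 2 + chi u v w 2 ^ 2 + chi u v w 3 ^ 2 +
        chi u v w 4 ^ 2 + chi u v w 5 ^ 2 + chi u v w 6 ^ 2 = 0 := by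
      rcases hp with h1 | h1 <;> rw [h1] at key <;> linarith [key]
    have hz : ∀ k, chi u v w k ^ 2 ≤ 0 → chi u v w k = 0 := fun k hk =>
      (pow_eq_zero_iff two_ne_zero).mp (le_antisymm hk (sq_nonneg _))
    have e0 := hz 0 (by linarith [sq_nonneg (chi u v w 1), sq_nonneg (chi u v w 2), sq_nonneg (chi u v w 3), sq_nonneg (chi u v w 4), sq_nonneg (chi u v w 5), sq_nonneg (chi u v w 6)])
    have e1 := hz 1 (by linarith [sq_nonneg (chi u v w 0), sq_nonneg (chi u v w 2), sq_nonneg (chi u v w 3), sq_nonneg (chi u v w 4), sq_nonneg (chi u v w 5), sq_nonneg (chi u v w 6)])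
    have e2 := hz 2 (by linarith [sq_nonneg (chi u v w 0), sq_nonneg (chi u v w 1), sq_nonneg (chi u v w 3), sq_nonneg (chi u v w 4), sq_nonneg (chi u v w 5), sq_nonneg (chi u v w 6)])
    have e3 := hz 3 (by linarith [sq_nonneg (chi u v w 0), sq_nonneg (chi u v w 1), sq_nonneg (chi u v w 2), sq_nonneg (chi u v w 4), sq_nonneg (chi u v w 5), sq_nonneg (chi u v w 6)])
    have e4 := hz 4 (by linarith [sq_nonneg (chi u v w 0), sq_nonneg (chi u v w 1), sq_nonneg (chi u v w 2), sq_nonneg (chi u v w 3), sq_nonneg (chi u v w 5), sq_nonneg (chi u v w 6)])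
    have e5 := hz 5 (by linarith [sq_nonneg (chi u v w 0), sq_nonneg (chi u v w 1), sq_nonneg (chi u v w 2), sq_nonneg (chi u v w 3), sq_nonneg (chi u v w 4), sq_nonneg (chi u v w 6)])
    have e6 := hz 6 (by linarith [sq_nonneg (chi u v w 0), sq_nonneg (chi u v w 1), sq_nonneg (chi u v w 2), sq_nonneg (chi u v w 3), sq_nonneg (chi u v w 4), sq_nonneg (chi u v w 5)])
    ext i
    fin_cases i
    · exact e0
    · exact e1
    · exact e2
    · exact e3
    · exact e4
    · exact e5
    · exact e6

end
end

section
/- Let (u,v,w) be a G₂-frame in ℝ⁷ (orthonormal with φ₀(u,v,w)=0) and R = χ(u,v,w). Then the seven vectors u, v, w, R, u×v, v×w, w×u form an orthonormal basis of ℝ⁷. -/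
open scoped RealInnerProductSpace

noncomputable section

lemma det_fin_four {R : Type*} [CommRing R] (A : Matrix (Fin 4) (Fin 4) R) :
    A.det =
      A 0 0 * (A 1 1 * (A 2 2 * A 3 3 - A 2 3 * A 3 2) - A 1 2 * (A 2 1 * A 3 3 - A 2 3 * A 3 1) + A 1 3 * (A 2 1 * A 3 2 - A 2 2 * A 3 1))
    - A 0 1 * (A 1 0 * (A 2 2 * A 3 3 - A 2 3 * A 3 2) - A 1 2 * (A 2 0 * A 3 3 - A 2 3 * A 3 0) + A 1 3 * (A 2 0 * A 3 2 - A 2 2 * A 3 0))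
    + A 0 2 * (A 1 0 * (A 2 1 * A 3 3 - A 2 3 * A 3 1) - A 1 1 * (A 2 0 * A 3 3 - A 2 3 * A 3 0) + A 1 3 * (A 2 0 * A 3 1 - A 2 1 * A 3 0))
    - A 0 3 * (A 1 0 * (A 2 1 * A 3 2 - A 2 2 * A 3 1) - A 1 1 * (A 2 0 * A 3 2 - A 2 2 * A 3 0) + A 1 2 * (A 2 0 * A 3 1 - A 2 1 * A 3 0)) := by
  rw [Matrix.det_succ_row_zero, Fin.sum_univ_four]
  simp [Matrix.det_fin_three, Matrix.submatrix, Fin.succAbove, Fin.succ,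
    Fin.castSucc, Fin.castAdd, Fin.castLE, show ((3:Fin 4):ℕ) = 3 from rfl]
  ring

lemma vec7_0 {α : Type*} (a b c d e f g : α) : ![a,b,c,d,e,f,g] 0 = a := rfl
lemma vec7_1 {α : Type*} (a b c d e f g : α) : ![a,b,c,d,e,f,g] 1 = b := rfl
lemma vec7_2 {α : Type*} (a b c d e f g : α) : ![a,b,c,d,e,f,g] 2 = c := rfl
lemma vec7_3 {α : Type*} (a b c d e f g : α) : ![a,b,c,d,e,f,g] 3 = d := rfl
lemma vec7_4 {α : Type*} (a b c d e f g : α) : ![a,b,c,d,e,f,g] 4 = e := rfl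
lemma vec7_5 {α : Type*} (a b c d e f g : α) : ![a,b,c,d,e,f,g] 5 = f := rfl
lemma vec7_6 {α : Type*} (a b c d e f g : α) : ![a,b,c,d,e,f,g] 6 = g := rfl

lemma fin7_0 (h : (0:ℕ) < 7) : (⟨0, h⟩ : Fin 7) = 0 := rfl
lemma fin7_1 (h : (1:ℕ) < 7) : (⟨1, h⟩ : Fin 7) = 1 := rfl
lemma fin7_2 (h : (2:ℕ) < 7) : (⟨2, h⟩ : Fin 7) = 2 := rfl
lemma fin7_3 (h : (3:ℕ) < 7) : (⟨3, h⟩ : Fin 7) = 3 := rfl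
lemma fin7_4 (h : (4:ℕ) < 7) : (⟨4, h⟩ : Fin 7) = 4 := rfl
lemma fin7_5 (h : (5:ℕ) < 7) : (⟨5, h⟩ : Fin 7) = 5 := rfl
lemma fin7_6 (h : (6:ℕ) < 7) : (⟨6, h⟩ : Fin 7) = 6 := rfl

lemma cross_inner_left (a b z : V7) : ⟪cross a b, z⟫ = phi0 ![a, b, z] := by
  simp [cross, chi, phi0, starPhi0, PiLp.inner_apply, RCLike.inner_apply, conj_trivial, Fin.sum_univ_seven, Matrix.det_fin_three, det_fin_four, EuclideanSpace.single_apply, Matrix.vecHead, Matrix.vecTail]; ring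

lemma cross_inner_right (z a b : V7) : ⟪z, cross a b⟫ = phi0 ![a, b, z] := by
  rw [real_inner_comm]; exact cross_inner_left a b z

lemma chi_inner_left (a b c z : V7) : ⟪chi a b c, z⟫ = starPhi0 ![a, b, c, z] := by
  simp [cross, chi, phi0, starPhi0, PiLp.inner_apply, RCLike.inner_apply, conj_trivial, Fin.sum_univ_seven, Matrix.det_fin_three, det_fin_four, EuclideanSpace.single_apply, Matrix.vecHead, Matrix.vecTail]; ring

lemma chi_inner_right (z a b c : V7) : ⟪z, chi a b c⟫ = starPhi0 ![a, b, c, z] := by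
  rw [real_inner_comm]; exact chi_inner_left a b c z

lemma phi0_13 (a b : V7) : phi0 ![a, b, a] = 0 := by
  simp [cross, chi, phi0, starPhi0, PiLp.inner_apply, RCLike.inner_apply, conj_trivial, Fin.sum_univ_seven, Matrix.det_fin_three, det_fin_four, EuclideanSpace.single_apply, Matrix.vecHead, Matrix.vecTail]; ring

lemma phi0_23 (a b : V7) : phi0 ![a, b, b] = 0 := by
  simp [cross, chi, phi0, starPhi0, PiLp.inner_apply, RCLike.inner_apply, conj_trivial, Fin.sum_univ_seven, Matrix.det_fin_three, det_fin_four, EuclideanSpace.single_apply, Matrix.vecHead, Matrix.vecTail]; ring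

lemma phi0_cyc (a b c : V7) : phi0 ![b, c, a] = phi0 ![a, b, c] := by
  simp [cross, chi, phi0, starPhi0, PiLp.inner_apply, RCLike.inner_apply, conj_trivial, Fin.sum_univ_seven, Matrix.det_fin_three, det_fin_four, EuclideanSpace.single_apply, Matrix.vecHead, Matrix.vecTail]; ring

lemma phi0_cyc2 (a b c : V7) : phi0 ![c, a, b] = phi0 ![a, b, c] := by
  simp [cross, chi, phi0, starPhi0, PiLp.inner_apply, RCLike.inner_apply, conj_trivial, Fin.sum_univ_seven, Matrix.det_fin_three, det_fin_four, EuclideanSpace.single_apply, Matrix.vecHead, Matrix.vecTail]; ring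

lemma star_self1 (a b c : V7) : starPhi0 ![a, b, c, a] = 0 := by
  simp [cross, chi, phi0, starPhi0, PiLp.inner_apply, RCLike.inner_apply, conj_trivial, Fin.sum_univ_seven, Matrix.det_fin_three, det_fin_four, EuclideanSpace.single_apply, Matrix.vecHead, Matrix.vecTail]; ring

lemma star_self2 (a b c : V7) : starPhi0 ![a, b, c, b] = 0 := by
  simp [cross, chi, phi0, starPhi0, PiLp.inner_apply, RCLike.inner_apply, conj_trivial, Fin.sum_univ_seven, Matrix.det_fin_three, det_fin_four, EuclideanSpace.single_apply, Matrix.vecHead, Matrix.vecTail]; ring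

lemma star_self3 (a b c : V7) : starPhi0 ![a, b, c, c] = 0 := by
  simp [cross, chi, phi0, starPhi0, PiLp.inner_apply, RCLike.inner_apply, conj_trivial, Fin.sum_univ_seven, Matrix.det_fin_three, det_fin_four, EuclideanSpace.single_apply, Matrix.vecHead, Matrix.vecTail]; ring

lemma star_cross1 (a b c : V7) : starPhi0 ![a, b, c, cross a b] = 0 := by
  simp [cross, chi, phi0, starPhi0, PiLp.inner_apply, RCLike.inner_apply, conj_trivial, Fin.sum_univ_seven, Matrix.det_fin_three, det_fin_four, EuclideanSpace.single_apply, Matrix.vecHead, Matrix.vecTail]; ring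

lemma star_cross2 (a b c : V7) : starPhi0 ![a, b, c, cross b c] = 0 := by
  simp [cross, chi, phi0, starPhi0, PiLp.inner_apply, RCLike.inner_apply, conj_trivial, Fin.sum_univ_seven, Matrix.det_fin_three, det_fin_four, EuclideanSpace.single_apply, Matrix.vecHead, Matrix.vecTail]; ring

lemma star_cross3 (a b c : V7) : starPhi0 ![a, b, c, cross c a] = 0 := by
  simp [cross, chi, phi0, starPhi0, PiLp.inner_apply, RCLike.inner_apply, conj_trivial, Fin.sum_univ_seven, Matrix.det_fin_three, det_fin_four, EuclideanSpace.single_apply, Matrix.vecHead, Matrix.vecTail]; ring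

lemma cross_norm (a b : V7) : ⟪cross a b, cross a b⟫ = ⟪a,a⟫ * ⟪b,b⟫ - ⟪a,b⟫ ^ 2 := by
  simp [cross, chi, phi0, starPhi0, PiLp.inner_apply, RCLike.inner_apply, conj_trivial, Fin.sum_univ_seven, Matrix.det_fin_three, det_fin_four, EuclideanSpace.single_apply, Matrix.vecHead, Matrix.vecTail, -inner_self_eq_norm_sq_to_K]; ring

lemma cross_adj (a b c : V7) :
    ⟪cross a b, cross b c⟫ = ⟪a,b⟫ * ⟪b,c⟫ - ⟪a,c⟫ * ⟪b,b⟫ := by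
  simp [cross, chi, phi0, starPhi0, PiLp.inner_apply, RCLike.inner_apply, conj_trivial, Fin.sum_univ_seven, Matrix.det_fin_three, det_fin_four, EuclideanSpace.single_apply, Matrix.vecHead, Matrix.vecTail, -inner_self_eq_norm_sq_to_K]; ring

lemma cross_adj2 (a b c : V7) :
    ⟪cross a b, cross c a⟫ = ⟪a,b⟫ * ⟪a,c⟫ - ⟪a,a⟫ * ⟪b,c⟫ := by
  simp [cross, chi, phi0, starPhi0, PiLp.inner_apply, RCLike.inner_apply, conj_trivial, Fin.sum_univ_seven, Matrix.det_fin_three, det_fin_four, EuclideanSpace.single_apply, Matrix.vecHead, Matrix.vecTail, -inner_self_eq_norm_sq_to_K]; ring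

set_option maxHeartbeats 4000000 in
lemma chi_norm (a b c : V7) :
    ⟪chi a b c, chi a b c⟫ =
      ⟪a,a⟫ * ⟪b,b⟫ * ⟪c,c⟫ + 2 * (⟪a,b⟫ * ⟪a,c⟫ * ⟪b,c⟫)
      - ⟪a,a⟫ * ⟪b,c⟫ ^ 2 - ⟪b,b⟫ * ⟪a,c⟫ ^ 2 - ⟪c,c⟫ * ⟪a,b⟫ ^ 2
      - (phi0 ![a, b, c]) ^ 2 := by
  simp [cross, chi, phi0, starPhi0, PiLp.inner_apply, RCLike.inner_apply, conj_trivial, Fin.sum_univ_seven, Matrix.det_fin_three, det_fin_four, EuclideanSpace.single_apply, Matrix.vecHead, Matrix.vecTail, -inner_self_eq_norm_sq_to_K]; ring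

/-- for a G₂-frame (u,v,w) and R = χ(u,v,w), the seven vectors
u, v, w, R, u×v, v×w, w×u form an orthonormal basis of ℝ⁷. -/
theorem orthonormal_frame (u v w : V7) (h : Orthonormal ℝ ![u, v, w])
    (hφ : phi0 ![u, v, w] = 0) :
    Orthonormal ℝ ![u, v, w, chi u v w, cross u v, cross v w, cross w u] ∧
    Submodule.span ℝ
      (Set.range ![u, v, w, chi u v w, cross u v, cross v w, cross w u]) = ⊤ := by
  have h' := orthonormal_iff_ite.mp h
  have huu : ⟪![u,v,w] 0, ![u,v,w] 0⟫ = (1:ℝ) := by simpa using h' 0 0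
  have huv : ⟪![u,v,w] 0, ![u,v,w] 1⟫ = (0:ℝ) := by simpa using h' 0 1
  have huw : ⟪![u,v,w] 0, ![u,v,w] 2⟫ = (0:ℝ) := by simpa using h' 0 2
  have hvu : ⟪![u,v,w] 1, ![u,v,w] 0⟫ = (0:ℝ) := by simpa using h' 1 0
  have hvv : ⟪![u,v,w] 1, ![u,v,w] 1⟫ = (1:ℝ) := by simpa using h' 1 1
  have hvw : ⟪![u,v,w] 1, ![u,v,w] 2⟫ = (0:ℝ) := by simpa using h' 1 2
  have hwu : ⟪![u,v,w] 2, ![u,v,w] 0⟫ = (0:ℝ) := by simpa using h' 2 0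
  have hwv : ⟪![u,v,w] 2, ![u,v,w] 1⟫ = (0:ℝ) := by simpa using h' 2 1
  have hww : ⟪![u,v,w] 2, ![u,v,w] 2⟫ = (1:ℝ) := by simpa using h' 2 2
  simp only [Matrix.cons_val_zero, Matrix.cons_val_one, Matrix.head_cons,
    Matrix.cons_val_two, Matrix.tail_cons] at huu huv huw hvu hvv hvw hwu hwv hww
  have key : ∀ i j, ⟪![u, v, w, chi u v w, cross u v, cross v w, cross w u] i,
      ![u, v, w, chi u v w, cross u v, cross v w, cross w u] j⟫ = if i = j then (1:ℝ) else 0 := by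
    intro i j
    fin_cases i <;> fin_cases j <;>
      simp only [fin7_0, fin7_1, fin7_2, fin7_3, fin7_4, fin7_5, fin7_6, vec7_0, vec7_1, vec7_2, vec7_3, vec7_4, vec7_5, vec7_6, Fin.isValue,
        Fin.reduceEq, reduceIte, Fin.zero_eta, Fin.mk_one]
    · exact huu
    · exact huv
    · exact huw
    · rw [chi_inner_right]; exact star_self1 u v w
    · rw [cross_inner_right]; exact phi0_13 u v
    · rw [cross_inner_right, phi0_cyc]; exact hφ
    · rw [cross_inner_right]; exact phi0_23 w u
    · exact hvu
    · exact hvv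
    · exact hvw
    · rw [chi_inner_right]; exact star_self2 u v w
    · rw [cross_inner_right]; exact phi0_23 u v
    · rw [cross_inner_right]; exact phi0_13 v w
    · rw [cross_inner_right, phi0_cyc2]; exact hφ
    · exact hwu
    · exact hwv
    · exact hww
    · rw [chi_inner_right]; exact star_self3 u v w
    · rw [cross_inner_right]; exact hφ
    · rw [cross_inner_right]; exact phi0_23 v w
    · rw [cross_inner_right]; exact phi0_13 w u
    · rw [chi_inner_left]; exact star_self1 u v w
    · rw [chi_inner_left]; exact star_self2 u v w
    · rw [chi_inner_left]; exact star_self3 u v w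
    · rw [chi_norm, huu, hvv, hww, huv, huw, hvw, hφ]; norm_num
    · rw [chi_inner_left]; exact star_cross1 u v w
    · rw [chi_inner_left]; exact star_cross2 u v w
    · rw [chi_inner_left]; exact star_cross3 u v w
    · rw [cross_inner_left]; exact phi0_13 u v
    · rw [cross_inner_left]; exact phi0_23 u v
    · rw [cross_inner_left]; exact hφ
    · rw [chi_inner_right]; exact star_cross1 u v w
    · rw [cross_norm, huu, hvv, huv]; norm_num
    · rw [cross_adj, huv, hvw, huw, hvv]; norm_num
    · rw [cross_adj2, huv, huw, huu, hvw]; norm_num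
    · rw [cross_inner_left, phi0_cyc]; exact hφ
    · rw [cross_inner_left]; exact phi0_13 v w
    · rw [cross_inner_left]; exact phi0_23 v w
    · rw [chi_inner_right]; exact star_cross2 u v w
    · rw [real_inner_comm, cross_adj, huv, hvw, huw, hvv]; norm_num
    · rw [cross_norm, hvv, hww, hvw]; norm_num
    · rw [cross_adj, hvw, hwu, hvu, hww]; norm_num
    · rw [cross_inner_left]; exact phi0_23 w u
    · rw [cross_inner_left, phi0_cyc2]; exact hφ
    · rw [cross_inner_left]; exact phi0_13 w u
    · rw [chi_inner_right]; exact star_cross3 u v w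
    · rw [real_inner_comm, cross_adj2, huv, huw, huu, hvw]; norm_num
    · rw [real_inner_comm, cross_adj, hvw, hwu, hvu, hww]; norm_num
    · rw [cross_norm, hww, huu, hwu]; norm_num
  refine ⟨orthonormal_iff_ite.mpr key, ?_⟩
  apply LinearIndependent.span_eq_top_of_card_eq_finrank'
    (orthonormal_iff_ite.mpr key).linearIndependent
  simp [finrank_euclideanSpace]

end
end
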